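/- Let R, R_d, R_l ∈ SO(3), p, p_d, p_l ∈ ℝ³, and K_p, K_R real 3×3 matrices. Write g = (R,p), g_d = (R_d,p_d), g_l = (R_l,p_l), and let f_G(g,g_d) ∈ ℝ⁶ be the elastic wrench whose translational part is RᵀR_d K_p R_dᵀ(p − p_d) and whose rotational part is the vee of K_R R_dᵀR − RᵀR_d K_R. Define the spatial-frame wrench f_G^s(g,g_d) = Ad_{g⁻¹}ᵀ f_G(g,g_d). Then the spatial wrench is SE(3)-equivariant: f_G^s(g_l g, g_l g_d) = Ad_{g_l⁻¹}ᵀ f_G^s(g, g_d). -/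
import Mathlib


open Matrix

/-- An element of `SE(3)` as a pair `(R, p)` of a `3×3` matrix and a vector. -/
abbrev SE3 := Matrix (Fin 3) (Fin 3) ℝ × (Fin 3 → ℝ)

/-- Group product on `SE(3)`: `(R₁,p₁)·(R₂,p₂) = (R₁R₂, R₁p₂ + p₁)`. -/
def se3Mul (a b : SE3) : SE3 := (a.1 * b.1, a.1.mulVec b.2 + a.2)

/-- Inverse on `SE(3)`: `(R,p)⁻¹ = (Rᵀ, −Rᵀp)`. -/
def se3Inv (a : SE3) : SE3 := (a.1ᵀ, -(a.1ᵀ.mulVec a.2))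

/-- The hat map `ω ↦ ω̂` sending `ω ∈ ℝ³` to the skew-symmetric matrix with
`ω̂ v = ω × v`. -/
def hat (ω : Fin 3 → ℝ) : Matrix (Fin 3) (Fin 3) ℝ :=
  !![0, -ω 2, ω 1; ω 2, 0, -ω 0; -ω 1, ω 0, 0]

/-- The vee map, sending a (skew-symmetric) `3×3` matrix `A` to the vector
`ω` with `ω̂ = A`. -/
def vee (A : Matrix (Fin 3) (Fin 3) ℝ) : Fin 3 → ℝ :=
  ![A 2 1, A 0 2, A 1 0]

/-- The `6×6` Adjoint matrix `Ad_g = [[R, p̂R],[0,R]]` of `g = (R,p) ∈ SE(3)`. -/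
def Adj (a : SE3) : Matrix (Fin 3 ⊕ Fin 3) (Fin 3 ⊕ Fin 3) ℝ :=
  Matrix.fromBlocks a.1 (hat a.2 * a.1) 0 a.1

/-- The body-frame elastic geometric wrench
`f_G(g,g_d) = (RᵀR_d K_p R_dᵀ(p − p_d), (K_R R_dᵀR − RᵀR_d K_R)^∨) ∈ ℝ⁶`. -/
def fG (Kp KR : Matrix (Fin 3) (Fin 3) ℝ) (g gd : SE3) : (Fin 3 ⊕ Fin 3) → ℝ :=
  Sum.elim ((g.1ᵀ * gd.1 * Kp * gd.1ᵀ).mulVec (g.2 - gd.2))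
    (vee (KR * gd.1ᵀ * g.1 - g.1ᵀ * gd.1 * KR))

/-- The spatial-frame elastic wrench `f_G^s(g,g_d) = Ad_{g⁻¹}ᵀ f_G(g,g_d)`. -/
def fGs (Kp KR : Matrix (Fin 3) (Fin 3) ℝ) (g gd : SE3) : (Fin 3 ⊕ Fin 3) → ℝ :=
  (Adj (se3Inv g))ᵀ.mulVec (fG Kp KR g gd)

/-- Cofactor identity: `Aᵀ ω̂(Av) A = det A • ω̂(v)` for any `3×3` matrix. -/
lemma cross_cofactor (A : Matrix (Fin 3) (Fin 3) ℝ) (v : Fin 3 → ℝ) :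
    Aᵀ * hat (A.mulVec v) * A = A.det • hat v := by
  ext i j
  fin_cases i <;> fin_cases j <;>
    simp [hat, Matrix.mul_apply, Matrix.mulVec, dotProduct,
      Fin.sum_univ_three, Matrix.det_fin_three, Matrix.smul_apply] <;> ring

lemma hat_rot (R : Matrix (Fin 3) (Fin 3) ℝ) (v : Fin 3 → ℝ)
    (hR : Rᵀ * R = 1) (hdet : R.det = 1) :
    hat (R.mulVec v) = R * hat v * Rᵀ := by
  have hR' : R * Rᵀ = 1 := mul_eq_one_comm.mp hR
  have h := cross_cofactor R v
  rw [hdet, one_smul] at h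
  calc hat (R.mulVec v) = (R * Rᵀ) * hat (R.mulVec v) * (R * Rᵀ) := by
        rw [hR']; simp
    _ = R * (Rᵀ * hat (R.mulVec v) * R) * Rᵀ := by
        noncomm_ring
    _ = R * hat v * Rᵀ := by rw [h]

lemma hat_add (x y : Fin 3 → ℝ) : hat (x + y) = hat x + hat y := by
  ext i j
  fin_cases i <;> fin_cases j <;> simp [hat] <;> ring

lemma Adj_mul (a b : SE3) (ha : a.1ᵀ * a.1 = 1) (hadet : a.1.det = 1) :
    Adj (se3Mul a b) = Adj a * Adj b := by
  unfold Adj se3Mul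
  rw [Matrix.fromBlocks_multiply]
  simp only [Matrix.zero_mul, Matrix.mul_zero, add_zero, zero_add]
  congr 1
  rw [hat_add, hat_rot a.1 b.2 ha hadet]
  have : a.1 * hat b.2 * a.1ᵀ * (a.1 * b.1) = a.1 * (hat b.2 * b.1) := by
    calc a.1 * hat b.2 * a.1ᵀ * (a.1 * b.1)
        = a.1 * hat b.2 * (a.1ᵀ * a.1) * b.1 := by noncomm_ring
      _ = a.1 * (hat b.2 * b.1) := by rw [ha]; noncomm_ring
  rw [Matrix.add_mul, this]
  noncomm_ring

lemma se3Inv_mul (a b : SE3) (ha : a.1ᵀ * a.1 = 1) :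
    se3Inv (se3Mul a b) = se3Mul (se3Inv b) (se3Inv a) := by
  unfold se3Inv se3Mul
  ext1
  · simp [Matrix.transpose_mul]
  · simp only [Matrix.transpose_mul, Matrix.mulVec_add, neg_add,
      ← Matrix.mulVec_mulVec, Matrix.mulVec_neg]
    have h : a.1ᵀ *ᵥ (a.1 *ᵥ b.2) = b.2 := by
      rw [Matrix.mulVec_mulVec, ha, Matrix.one_mulVec]
    rw [h]; abel

/-- Proposition 2 (wrench equivariance): the spatial-frame elastic wrench is
`SE(3)`-equivariant, `f_G^s(g_l g, g_l g_d) = Ad_{g_l⁻¹}ᵀ f_G^s(g, g_d)`. -/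
theorem spatial_wrench_equivariant
    (R Rd Rl Kp KR : Matrix (Fin 3) (Fin 3) ℝ) (p pd pl : Fin 3 → ℝ)
    (hR : Rᵀ * R = 1) (hRdet : R.det = 1)
    (hRd : Rdᵀ * Rd = 1) (hRddet : Rd.det = 1)
    (hRl : Rlᵀ * Rl = 1) (hRldet : Rl.det = 1) :
    fGs Kp KR (se3Mul (Rl, pl) (R, p)) (se3Mul (Rl, pl) (Rd, pd)) =
      (Adj (se3Inv (Rl, pl)))ᵀ.mulVec (fGs Kp KR (R, p) (Rd, pd)) := by
  have hRl' : Rl * Rlᵀ = 1 := mul_eq_one_comm.mp hRl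
  -- left-invariance of the body wrench
  have hfG : fG Kp KR (se3Mul (Rl, pl) (R, p)) (se3Mul (Rl, pl) (Rd, pd)) =
      fG Kp KR (R, p) (Rd, pd) := by
    unfold fG se3Mul
    simp only
    have hmat : (Rl * R)ᵀ * (Rl * Rd) * Kp * (Rl * Rd)ᵀ * Rl
          = Rᵀ * Rd * Kp * Rdᵀ := by
        simp only [Matrix.transpose_mul]
        calc Rᵀ * Rlᵀ * (Rl * Rd) * Kp * (Rdᵀ * Rlᵀ) * Rl
            = Rᵀ * (Rlᵀ * Rl) * Rd * Kp * Rdᵀ * (Rlᵀ * Rl) := by noncomm_ring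
          _ = Rᵀ * Rd * Kp * Rdᵀ := by rw [hRl]; noncomm_ring
    have hvec : (Rl.mulVec p + pl) - (Rl.mulVec pd + pl) = Rl.mulVec (p - pd) := by
      rw [Matrix.mulVec_sub]; abel
    have h1 : KR * (Rl * Rd)ᵀ * (Rl * R) = KR * Rdᵀ * R := by
      simp only [Matrix.transpose_mul]
      calc KR * (Rdᵀ * Rlᵀ) * (Rl * R) = KR * Rdᵀ * (Rlᵀ * Rl) * R := by noncomm_ring
        _ = KR * Rdᵀ * R := by rw [hRl]; noncomm_ring
    have h2 : (Rl * R)ᵀ * (Rl * Rd) * KR = Rᵀ * Rd * KR := by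
      simp only [Matrix.transpose_mul]
      calc Rᵀ * Rlᵀ * (Rl * Rd) * KR = Rᵀ * (Rlᵀ * Rl) * Rd * KR := by noncomm_ring
          _ = Rᵀ * Rd * KR := by rw [hRl]; noncomm_ring
    rw [hvec, Matrix.mulVec_mulVec, hmat, h1, h2]
  have hinv : se3Inv (se3Mul (Rl, pl) (R, p)) =
      se3Mul (se3Inv (R, p)) (se3Inv (Rl, pl)) := se3Inv_mul _ _ hRl
  have hso : ((se3Inv (R, p)).1)ᵀ * (se3Inv (R, p)).1 = 1 := by
    simp [se3Inv, mul_eq_one_comm.mp hR]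
  have hsodet : ((se3Inv (R, p)).1).det = 1 := by
    simp [se3Inv, hRdet]
  have hAdj : Adj (se3Inv (se3Mul (Rl, pl) (R, p))) =
      Adj (se3Inv (R, p)) * Adj (se3Inv (Rl, pl)) := by
    rw [hinv, Adj_mul _ _ hso hsodet]
  unfold fGs
  rw [hfG, hAdj, Matrix.transpose_mul, ← Matrix.mulVec_mulVec]
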